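/- Let G be a connected P_t-free graph (t ≥ 3) and let H_t be as defined. Then for every homomorphism h : G → H_t, either no vertex of G is mapped into {0, 1}, or no vertex of G is mapped into {t, t+1, a, b, a', b'}. -/

import Mathlib

open SimpleGraph

def Ht (t : ℕ) : SimpleGraph (ZMod (2 * t) ⊕ Fin 4) :=
  SimpleGraph.fromRel (fun x y =>
    match x, y with
    | Sum.inl i, Sum.inl j => j = i + 1
    | Sum.inl i, Sum.inr j =>
        (i = ((t : ℕ) + 1 : ℕ) ∧ (j : ℕ) = 0) ∨ (i = (t : ℕ) ∧ (j : ℕ) = 2)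
    | Sum.inr i, Sum.inr j =>
        ((i : ℕ) = 0 ∧ (j : ℕ) = 2) ∨ ((i : ℕ) = 0 ∧ (j : ℕ) = 1) ∨
          ((i : ℕ) = 2 ∧ (j : ℕ) = 3)
    | _, _ => False)

/-- Potential function on `H_t`: distance to the set `{0, 1}` (plus a
Lipschitz extension to the pendant vertices). -/
def fHt (t : ℕ) : ZMod (2 * t) ⊕ Fin 4 → ℕ
  | Sum.inl i => if i.val = 0 then 0 else if i.val ≤ t then i.val - 1 else 2 * t - i.val
  | Sum.inr j => t + j.val % 2

lemma fHt_adj {t : ℕ} (ht : 3 ≤ t) {x y : ZMod (2 * t) ⊕ Fin 4}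
    (hxy : (Ht t).Adj x y) : fHt t y ≤ fHt t x + 1 := by
  have h2t : 1 < 2 * t := by omega
  haveI hne : NeZero (2 * t) := ⟨by omega⟩
  rw [Ht, SimpleGraph.fromRel_adj] at hxy
  obtain ⟨hneq, hrel⟩ := hxy
  match x, y with
  | Sum.inl i, Sum.inl j =>
    have hi : i.val < 2 * t := ZMod.val_lt i
    have hj : j.val < 2 * t := ZMod.val_lt j
    have h1 : (1 : ZMod (2 * t)).val = 1 := ZMod.val_one'' (by omega)
    rcases hrel with h | h
    · have hv : j.val = (i.val + 1) % (2 * t) := by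
        rw [h, ZMod.val_add, h1]
      rcases Nat.lt_or_ge (i.val + 1) (2 * t) with hc | hc
      · rw [Nat.mod_eq_of_lt hc] at hv
        simp only [fHt]
        split_ifs <;> first | omega | simp_all
      · have hiv : i.val + 1 = 2 * t := by omega
        rw [hiv, Nat.mod_self] at hv
        simp only [fHt]
        split_ifs <;> first | omega | simp_all
    · have hv : i.val = (j.val + 1) % (2 * t) := by
        rw [h, ZMod.val_add, h1]
      rcases Nat.lt_or_ge (j.val + 1) (2 * t) with hc | hc
      · rw [Nat.mod_eq_of_lt hc] at hv
        simp only [fHt]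
        split_ifs <;> first | omega | simp_all
      · have hjv : j.val + 1 = 2 * t := by omega
        rw [hjv, Nat.mod_self] at hv
        simp only [fHt]
        split_ifs <;> first | omega | simp_all
  | Sum.inl i, Sum.inr j =>
    rcases hrel with (⟨hi, hj⟩ | ⟨hi, hj⟩) | hf
    · have hv : i.val = t + 1 := by rw [hi, ZMod.val_natCast_of_lt (by omega)]
      simp only [fHt, hv, hj]
      split_ifs <;> first | omega | simp_all
    · have hv : i.val = t := by rw [hi, ZMod.val_natCast_of_lt (by omega)]
      simp only [fHt, hv, hj]
      split_ifs <;> first | omega | simp_all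
    · exact hf.elim
  | Sum.inr i, Sum.inl j =>
    rcases hrel with hf | (⟨hj, hi⟩ | ⟨hj, hi⟩)
    · exact hf.elim
    · have hv : j.val = t + 1 := by rw [hj, ZMod.val_natCast_of_lt (by omega)]
      simp only [fHt, hv, hi]
      split_ifs <;> first | omega | simp_all
    · have hv : j.val = t := by rw [hj, ZMod.val_natCast_of_lt (by omega)]
      simp only [fHt, hv, hi]
      split_ifs <;> first | omega | simp_all
  | Sum.inr i, Sum.inr j =>
    simp only [fHt]
    rcases hrel with (⟨h1, h2⟩ | ⟨h1, h2⟩ | ⟨h1, h2⟩) | (⟨h1, h2⟩ | ⟨h1, h2⟩ | ⟨h1, h2⟩) <;>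
      omega

lemma fHt_walk {t : ℕ} (ht : 3 ≤ t) {x y : ZMod (2 * t) ⊕ Fin 4}
    (w : (Ht t).Walk x y) : fHt t y ≤ fHt t x + w.length := by
  induction w with
  | nil => simp
  | cons h p ih =>
    have := fHt_adj ht h
    simp only [SimpleGraph.Walk.length_cons]
    omega

/-- Prefix distance bound for walks. -/
lemma dist_getVert_le {V : Type*} {G : SimpleGraph V} (hconn : G.Connected) {u v : V}
    (w : G.Walk u v) (i : ℕ) : G.dist u (w.getVert i) ≤ i := by
  induction w generalizing i with
  | nil => simp [SimpleGraph.Walk.getVert, SimpleGraph.dist_self]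
  | @cons a b c h p ih =>
    cases i with
    | zero => simp [SimpleGraph.Walk.getVert]
    | succ n =>
      rw [SimpleGraph.Walk.getVert_cons_succ]
      calc G.dist a (p.getVert n) ≤ G.dist a b + G.dist b (p.getVert n) :=
            hconn.dist_triangle
        _ ≤ 1 + n := by
            have h1 : G.dist a b ≤ 1 := by
              have := SimpleGraph.dist_le h.toWalk
              simpa using this
            exact Nat.add_le_add h1 (ih n)
        _ = n + 1 := by omega

/-- Suffix distance bound for walks. -/
lemma getVert_dist_le {V : Type*} {G : SimpleGraph V} {u v : V}
    (w : G.Walk u v) (i : ℕ) : G.dist (w.getVert i) v ≤ w.length - i := by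
  induction w generalizing i with
  | nil => simp [SimpleGraph.Walk.getVert, SimpleGraph.dist_self]
  | @cons a b c h p ih =>
    cases i with
    | zero =>
      have := SimpleGraph.dist_le (SimpleGraph.Walk.cons h p)
      simpa using this
    | succ n =>
      rw [SimpleGraph.Walk.getVert_cons_succ]
      have := ih n
      simp only [SimpleGraph.Walk.length_cons]
      omega

lemma dist_le_of_free {V : Type*} {t : ℕ} (ht : 3 ≤ t) {G : SimpleGraph V}
    (hconn : G.Connected) (hPtfree : ¬ Nonempty (pathGraph t ↪g G))
    (u v : V) : G.dist u v ≤ t - 2 := by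
  by_contra hcon
  push_neg at hcon
  obtain ⟨w, hw⟩ := hconn.exists_walk_length_eq_dist u v
  have hlen : t - 1 ≤ w.length := by omega
  -- distances along a geodesic
  have hdist : ∀ i ≤ w.length, G.dist u (w.getVert i) = i := by
    intro i hi
    have h1 := dist_getVert_le hconn w i
    have h2 := getVert_dist_le w i
    have h3 := hconn.dist_triangle (u := u) (v := w.getVert i) (w := v)
    omega
  refine hPtfree ⟨⟨⟨fun k => w.getVert k, ?_⟩, ?_⟩⟩
  · intro a b hab
    have ha := hdist a (by omega)
    have hb := hdist b (by omega)
    have hab' : w.getVert a = w.getVert b := hab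
    have : (a : ℕ) = b := by rw [← ha, ← hb, hab']
    exact Fin.ext this
  · intro a b
    show G.Adj (w.getVert (a : ℕ)) (w.getVert (b : ℕ)) ↔ (pathGraph t).Adj a b
    constructor
    · intro hadj
      have ha := hdist a (by omega)
      have hb := hdist b (by omega)
      have h1 : G.dist (w.getVert a) (w.getVert b) ≤ 1 := by
        have := SimpleGraph.dist_le hadj.toWalk
        simpa using this
      have h2 := hconn.dist_triangle (u := u) (v := w.getVert a) (w := w.getVert b)
      have h3 := hconn.dist_triangle (u := u) (v := w.getVert b) (w := w.getVert a)
      have hd1 : G.dist (w.getVert b) (w.getVert a) = G.dist (w.getVert a) (w.getVert b) :=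
        SimpleGraph.dist_comm
      have hne : (a : ℕ) ≠ b := by
        intro hh
        exact hadj.ne (by rw [Fin.ext hh])
      rw [SimpleGraph.pathGraph_adj]
      omega
    · intro hadj
      rw [SimpleGraph.pathGraph_adj] at hadj
      rcases hadj with hab | hab
      · have hlt : (a : ℕ) < w.length := by omega
        have := w.adj_getVert_succ hlt
        rwa [hab] at this
      · have hlt : (b : ℕ) < w.length := by omega
        have := w.adj_getVert_succ hlt
        rw [hab] at this
        exact this.symm

/-- For a connected `P_t`-free graph `G` and a homomorphism `h : G → H_t`,
either no vertex of `G` is mapped into `{0, 1}`, or no vertex is mapped into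
`{t, t+1, a, b, a', b'}`. -/
theorem stmt16 {V : Type*} (t : ℕ) (ht : 3 ≤ t) (G : SimpleGraph V)
    (hconn : G.Connected) (hPtfree : ¬ Nonempty (pathGraph t ↪g G))
    (h : G →g Ht t) :
    (∀ v : V, h v ∉ ({Sum.inl 0, Sum.inl 1} : Set (ZMod (2 * t) ⊕ Fin 4))) ∨
    (∀ v : V, h v ∉ ({Sum.inl ((t : ℕ) : ZMod (2 * t)),
        Sum.inl (((t : ℕ) + 1 : ℕ) : ZMod (2 * t)),
        Sum.inr 0, Sum.inr 1, Sum.inr 2, Sum.inr 3} :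
        Set (ZMod (2 * t) ⊕ Fin 4))) := by
  by_contra hcon
  push_neg at hcon
  obtain ⟨⟨u, hu⟩, ⟨v, hv⟩⟩ := hcon
  haveI hne : NeZero (2 * t) := ⟨by omega⟩
  -- f (h u) = 0
  have hfu : fHt t (h u) = 0 := by
    simp only [Set.mem_insert_iff, Set.mem_singleton_iff] at hu
    rcases hu with hu | hu <;> rw [hu]
    · simp [fHt, ZMod.val_zero]
    · have h1 : (1 : ZMod (2 * t)).val = 1 := ZMod.val_one'' (by omega)
      simp only [fHt, h1]
      split_ifs <;> first | omega | simp_all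
  -- f (h v) ≥ t - 1
  have hfv : t - 1 ≤ fHt t (h v) := by
    simp only [Set.mem_insert_iff, Set.mem_singleton_iff] at hv
    rcases hv with hv | hv | hv | hv | hv | hv <;> rw [hv]
    · have hval : ((t : ℕ) : ZMod (2 * t)).val = t := ZMod.val_natCast_of_lt (by omega)
      simp only [fHt, hval]
      split_ifs <;> first | omega | simp_all
    · have hval : (((t : ℕ) + 1 : ℕ) : ZMod (2 * t)).val = t + 1 :=
        ZMod.val_natCast_of_lt (by omega)
      simp only [fHt, hval]
      split_ifs <;> first | omega | simp_all
    all_goals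
      have e0 : ((0 : Fin 4) : ℕ) = 0 := rfl
      have e1 : ((1 : Fin 4) : ℕ) = 1 := rfl
      have e2 : ((2 : Fin 4) : ℕ) = 2 := rfl
      have e3 : ((3 : Fin 4) : ℕ) = 3 := rfl
      simp only [fHt]
      omega
  obtain ⟨w, hw⟩ := hconn.exists_walk_length_eq_dist u v
  have hd := dist_le_of_free ht hconn hPtfree u v
  have hmap := fHt_walk ht (w.map h)
  rw [SimpleGraph.Walk.length_map, hw] at hmap
  omega
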